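/- Let (ℳ, D(ℳ)) be an operator-valued multiplication operator on L^p(Ω,X) with fiber operators (M(s), D(M(s)))_{s∈Ω}, generating a multiplication semigroup (𝒯(t))_{t≥0} of type (M,ω), where for μ-almost every s the fiber operator M(s) generates a C₀-semigroup (T_s(t))_{t≥0} of type (M,ω) on X with (𝒯(t)f)(s) = T_s(t)f(s) μ-a.e., and assume 0 ∈ ρ(M(s)) for μ-almost every s. Let X_{-1,s} be the extrapolation space of X with respect to M(s), let M_{-1}(s) and (T_{-1,s}(t))_{t≥0} be the extrapolated operator and semigroup, and let 𝒳 := { f ∈ ∏_{s∈Ω} X_{-1,s} : there exists g ∈ L^p(Ω,X) with f(s) = M_{-1}(s)g(s) for μ-a.e. s }, equipped with the norm ‖f‖_𝒳 := (∫_Ω ‖f(s)‖_{-1,s}^p dμ(s))^{1/p}. Then (S(t)f)(s) := T_{-1,s}(t)f(s), for t ≥ 0, f ∈ 𝒳, defines a C₀-semigroup (S(t))_{t≥0} on 𝒳 which extends (𝒯(t))_{t≥0}, and its generator is the operator ℳ_{-1} given by (ℳ_{-1}f)(s) = M_{-1}(s)f(s) with domain D(ℳ_{-1}) = L^p(Ω,X).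 -/

import Mathlib

open MeasureTheory Filter
open scoped ENNReal NNReal

noncomputable section

/-- `R` is the resolvent operator of the (possibly unbounded) operator `A` at `lam`. -/
def IsResolvent {X : Type*} [NormedAddCommGroup X] [NormedSpace ℂ X]
    (A : X →ₗ.[ℂ] X) (lam : ℂ) (R : X →L[ℂ] X) : Prop :=
  ∃ hR : ∀ x : X, R x ∈ A.domain,
    (∀ x : X, lam • R x - A ⟨R x, hR x⟩ = x) ∧
    ∀ y : A.domain, R (lam • (y : X) - A y) = y

def InResolventSet {X : Type*} [NormedAddCommGroup X] [NormedSpace ℂ X]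
    (A : X →ₗ.[ℂ] X) (lam : ℂ) : Prop :=
  ∃ R : X →L[ℂ] X, IsResolvent A lam R

def IsBoundedInverse {X : Type*} [NormedAddCommGroup X] [NormedSpace ℂ X]
    (A : X →ₗ.[ℂ] X) (B : X →L[ℂ] X) : Prop :=
  ∃ hB : ∀ x : X, B x ∈ A.domain,
    (∀ x : X, A ⟨B x, hB x⟩ = x) ∧ ∀ y : A.domain, B (A y) = y

/-- `𝓜` is the operator-valued multiplication operator on `L^p(Ω,X)` with fibers `M s`. -/
def IsMulOp {Ω : Type*} [MeasurableSpace Ω] (μ : Measure Ω)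
    {X : Type*} [NormedAddCommGroup X] [NormedSpace ℂ X] (p : ℝ≥0∞) [Fact (1 ≤ p)]
    (M : Ω → X →ₗ.[ℂ] X) (𝓜 : Lp X p μ →ₗ.[ℂ] Lp X p μ) : Prop :=
  (∀ f : Lp X p μ, f ∈ 𝓜.domain ↔
    ∃ g : Lp X p μ, ∀ᵐ s ∂μ, ∃ h : f s ∈ (M s).domain, g s = M s ⟨f s, h⟩) ∧
  ∀ f : 𝓜.domain, ∀ᵐ s ∂μ, ∃ h : (f : Lp X p μ) s ∈ (M s).domain,
    (𝓜 f) s = M s ⟨(f : Lp X p μ) s, h⟩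

def IsC0Semigroup {Y : Type*} [NormedAddCommGroup Y] [NormedSpace ℂ Y]
    (T : ℝ → Y →L[ℂ] Y) : Prop :=
  T 0 = 1 ∧ (∀ t r : ℝ, 0 ≤ t → 0 ≤ r → T (t + r) = T t ∘L T r) ∧
  ∀ y : Y, ContinuousOn (fun t => T t y) (Set.Ici (0 : ℝ))

def IsGenerator {Y : Type*} [NormedAddCommGroup Y] [NormedSpace ℂ Y]
    (T : ℝ → Y →L[ℂ] Y) (A : Y →ₗ.[ℂ] Y) : Prop :=
  (∀ y : Y, y ∈ A.domain ↔
    ∃ z : Y, Tendsto (fun t : ℝ => t⁻¹ • (T t y - y)) (nhdsWithin 0 (Set.Ioi 0)) (nhds z)) ∧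
  ∀ y : A.domain, Tendsto (fun t : ℝ => t⁻¹ • (T t (y : Y) - (y : Y)))
    (nhdsWithin 0 (Set.Ioi 0)) (nhds (A y))

/-- (Lemma 3.1) Let `𝓜` be a multiplication operator generating a
multiplication semigroup `(𝒯(t))` of type `(C,ω)` with fiber semigroups `(T_s(t))` of type
`(C,ω)` generated by the fiber operators `M(s)`, and let `0 ∈ ρ(M(s))` a.e.  Given the
extrapolated fibers `X_{-1,s}` (Banach spaces `Xm s` with dense embeddings `jmap s : X → Xm s`
satisfying `‖jmap s x‖ = ‖M(s)⁻¹ x‖`), the extrapolated operators `M_{-1}(s) = Mm s` and the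
extrapolated semigroups `(T_{-1,s}(t)) = Tm s`, and the space
`𝒳 = {f ∈ ∏ₛ X_{-1,s} : ∃ g ∈ L^p(Ω,X), f = M_{-1}(·)g(·)}` with
`‖f‖_𝒳 = (∫ ‖f(s)‖_{-1,s}^p dμ)^{1/p}` (presented by the evaluation map `toFib`), the formula
`(S(t)f)(s) = T_{-1,s}(t) f(s)` defines a `C₀`-semigroup on `𝒳` extending `(𝒯(t))`, whose
generator is `ℳ_{-1}` given by `(ℳ_{-1}f)(s) = M_{-1}(s) f(s)` with domain `L^p(Ω,X)`. -/
theorem extrapolated_multiplication_semigroup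
    {Ω : Type*} [MeasurableSpace Ω] {μ : Measure Ω} [SigmaFinite μ]
    {X : Type*} [NormedAddCommGroup X] [NormedSpace ℂ X] [CompleteSpace X]
    {p : ℝ≥0∞} [Fact (1 ≤ p)] (hp : p ≠ ∞)
    -- the multiplication operator and the multiplication semigroup it generates
    (M : Ω → X →ₗ.[ℂ] X) (𝓜 : Lp X p μ →ₗ.[ℂ] Lp X p μ) (hMul : IsMulOp μ p M 𝓜)
    (𝒯 : ℝ → Lp X p μ →L[ℂ] Lp X p μ) (hT : IsC0Semigroup 𝒯) (hTgen : IsGenerator 𝒯 𝓜)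
    (C ω : ℝ) (hC : 0 ≤ C) (htype : ∀ t : ℝ, 0 ≤ t → ‖𝒯 t‖ ≤ C * Real.exp (ω * t))
    -- the fiber semigroups, of the same type, generated by the fiber operators
    (T : Ω → ℝ → X →L[ℂ] X)
    (hfib : ∀ᵐ s ∂μ, IsC0Semigroup (T s) ∧ IsGenerator (T s) (M s) ∧
      ∀ t : ℝ, 0 ≤ t → ‖T s t‖ ≤ C * Real.exp (ω * t))
    (hrep : ∀ t : ℝ, 0 ≤ t → ∀ f : Lp X p μ, ∀ᵐ s ∂μ, (𝒯 t f) s = T s t (f s))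
    -- `0 ∈ ρ(M(s))` for a.e. `s`, with inverse `Minv s = M(s)⁻¹`
    (Minv : Ω → X →L[ℂ] X) (hinv : ∀ᵐ s ∂μ, IsBoundedInverse (M s) (Minv s))
    -- the extrapolated fiber spaces `X_{-1,s}` with embeddings `jmap s`
    (Xm : Ω → Type*) [∀ s, NormedAddCommGroup (Xm s)] [∀ s, NormedSpace ℂ (Xm s)]
    [∀ s, CompleteSpace (Xm s)]
    (jmap : ∀ s, X →ₗ[ℂ] Xm s)
    (hj : ∀ᵐ s ∂μ, (∀ x : X, ‖jmap s x‖ = ‖Minv s x‖) ∧ DenseRange (jmap s))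
    -- the extrapolated fiber operators `M_{-1}(s)`, isometric isomorphisms `X → X_{-1,s}`
    (Mm : ∀ s, X →ₗ[ℂ] Xm s)
    (hMm : ∀ᵐ s ∂μ, (∀ x : X, Mm s (Minv s x) = jmap s x) ∧
      (∀ x : X, ‖Mm s x‖ = ‖x‖) ∧ Function.Surjective (Mm s))
    -- the extrapolated fiber semigroups `T_{-1,s}`, extending `T_s` and generated by `M_{-1}(s)`
    (Tm : ∀ s, ℝ → Xm s →L[ℂ] Xm s)
    (hTm : ∀ᵐ s ∂μ, IsC0Semigroup (Tm s) ∧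
      (∀ t : ℝ, 0 ≤ t → ∀ x : X, Tm s t (jmap s x) = jmap s (T s t x)) ∧
      (∀ x : X, Tendsto (fun t : ℝ => t⁻¹ • (Tm s t (jmap s x) - jmap s x))
        (nhdsWithin 0 (Set.Ioi 0)) (nhds (Mm s x))) ∧
      (∀ ξ : Xm s, (∃ z : Xm s, Tendsto (fun t : ℝ => t⁻¹ • (Tm s t ξ - ξ))
          (nhdsWithin 0 (Set.Ioi 0)) (nhds z)) → ∃ x : X, ξ = jmap s x))
    -- the space `𝒳`, presented by the fiberwise evaluation map `toFib`
    (𝒳 : Type*) [NormedAddCommGroup 𝒳] [NormedSpace ℂ 𝒳] [CompleteSpace 𝒳]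
    (toFib : 𝒳 → ∀ s, Xm s)
    (htoFib_add : ∀ f g : 𝒳, ∀ᵐ s ∂μ, toFib (f + g) s = toFib f s + toFib g s)
    (htoFib_smul : ∀ (c : ℂ) (f : 𝒳), ∀ᵐ s ∂μ, toFib (c • f) s = c • toFib f s)
    (htoFib_inj : ∀ f g : 𝒳, (∀ᵐ s ∂μ, toFib f s = toFib g s) → f = g)
    (hmem : ∀ f : 𝒳, ∃ g : Lp X p μ, ∀ᵐ s ∂μ, toFib f s = Mm s (g s))
    (hsurj : ∀ g : Lp X p μ, ∃ f : 𝒳, ∀ᵐ s ∂μ, toFib f s = Mm s (g s))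
    (hnorm : ∀ f : 𝒳, ENNReal.ofReal (‖f‖ ^ p.toReal)
      = ∫⁻ s, ENNReal.ofReal (‖toFib f s‖ ^ p.toReal) ∂μ) :
    ∃ S : ℝ → 𝒳 →L[ℂ] 𝒳,
      IsC0Semigroup S ∧
      -- `(S(t)f)(s) = T_{-1,s}(t) f(s)`
      (∀ t : ℝ, 0 ≤ t → ∀ f : 𝒳, ∀ᵐ s ∂μ, toFib (S t f) s = Tm s t (toFib f s)) ∧
      -- `S` extends `𝒯` along the canonical inclusion `L^p(Ω,X) ⊆ 𝒳`
      (∀ t : ℝ, 0 ≤ t → ∀ (g : Lp X p μ) (f : 𝒳),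
        (∀ᵐ s ∂μ, toFib f s = jmap s (g s)) →
        ∀ᵐ s ∂μ, toFib (S t f) s = jmap s ((𝒯 t g) s)) ∧
      -- the generator of `S` is `ℳ_{-1}`, with domain `L^p(Ω,X)` and fiberwise action `M_{-1}(s)`
      ∀ 𝒜 : 𝒳 →ₗ.[ℂ] 𝒳, IsGenerator S 𝒜 →
        (∀ f : 𝒳, f ∈ 𝒜.domain ↔ ∃ g : Lp X p μ, ∀ᵐ s ∂μ, toFib f s = jmap s (g s)) ∧
        ∀ (f : 𝒜.domain) (g : Lp X p μ), (∀ᵐ s ∂μ, toFib (f : 𝒳) s = jmap s (g s)) →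
          ∀ᵐ s ∂μ, toFib (𝒜 f) s = Mm s (g s) := by  classical
  have hp1 : (1:ℝ≥0∞) ≤ p := Fact.out
  have hp0 : p ≠ 0 := (lt_of_lt_of_le zero_lt_one hp1).ne'
  have hpr : 0 < p.toReal := ENNReal.toReal_pos hp0 hp
  -- Lp norm formula
  have h1 : ∀ g : Lp X p μ, ENNReal.ofReal (‖g‖ ^ p.toReal)
      = ∫⁻ s, ENNReal.ofReal (‖g s‖ ^ p.toReal) ∂μ := by
    intro g
    have hfin : eLpNorm g p μ ≠ ∞ := Lp.eLpNorm_ne_top g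
    rw [eLpNorm_eq_lintegral_rpow_enorm_toReal hp0 hp] at hfin; simp only [enorm_eq_nnnorm] at hfin
    have hIfin : (∫⁻ s, (‖g s‖₊ : ℝ≥0∞) ^ p.toReal ∂μ) ≠ ∞ := by
      intro hI
      exact hfin (by rw [hI, ENNReal.top_rpow_of_pos (by positivity)])
    have hnormg : ‖g‖ = ((∫⁻ s, (‖g s‖₊ : ℝ≥0∞) ^ p.toReal ∂μ) ^ (1 / p.toReal)).toReal := by
      rw [Lp.norm_def, eLpNorm_eq_lintegral_rpow_enorm_toReal hp0 hp]; simp only [enorm_eq_nnnorm]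
    calc ENNReal.ofReal (‖g‖ ^ p.toReal)
        = (∫⁻ s, (‖g s‖₊ : ℝ≥0∞) ^ p.toReal ∂μ) := by
          rw [hnormg, ENNReal.toReal_rpow, ← ENNReal.rpow_mul,
            one_div, inv_mul_cancel₀ hpr.ne', ENNReal.rpow_one,
            ENNReal.ofReal_toReal hIfin]
      _ = ∫⁻ s, ENNReal.ofReal (‖g s‖ ^ p.toReal) ∂μ := by
          refine lintegral_congr fun s => ?_
          rw [← ENNReal.ofReal_rpow_of_nonneg (norm_nonneg _) hpr.le,
            ofReal_norm_eq_enorm, enorm_eq_nnnorm]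
  have hreq : ∀ a b : ℝ, 0 ≤ a → 0 ≤ b →
      ENNReal.ofReal (a ^ p.toReal) = ENNReal.ofReal (b ^ p.toReal) → a = b := by
    intro a b ha hb h
    have := (ENNReal.ofReal_eq_ofReal_iff (by positivity) (by positivity)).mp h
    exact Real.rpow_left_injOn hpr.ne' ha hb this
  -- the correspondence between `𝒳` and `L^p(Ω,X)`
  set Φ : Lp X p μ → 𝒳 := fun g => (hsurj g).choose with hΦdef
  have hΦ : ∀ g : Lp X p μ, ∀ᵐ s ∂μ, toFib (Φ g) s = Mm s (g s) :=
    fun g => (hsurj g).choose_spec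
  set Ψ : 𝒳 → Lp X p μ := fun f => (hmem f).choose with hΨdef
  have hΨ : ∀ f : 𝒳, ∀ᵐ s ∂μ, toFib f s = Mm s ((Ψ f) s) :=
    fun f => (hmem f).choose_spec
  -- a.e. injectivity of `Mm`
  have hMmInj : ∀ᵐ s ∂μ, Function.Injective (Mm s) := by
    filter_upwards [hMm] with s hs
    intro x y hxy
    have : ‖x - y‖ = 0 := by
      rw [← hs.2.1 (x - y), map_sub, hxy, sub_self, norm_zero]
    exact sub_eq_zero.mp (norm_eq_zero.mp this)
  -- `Ψ` is determined by the defining property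
  have hΨuniq : ∀ (f : 𝒳) (g : Lp X p μ),
      (∀ᵐ s ∂μ, toFib f s = Mm s (g s)) → Ψ f = g := by
    intro f g hg
    refine Lp.ext ?_
    filter_upwards [hΨ f, hg, hMmInj] with s h1s h2s h3s
    exact h3s (h1s.symm.trans h2s)
  have hΦΨ : ∀ f : 𝒳, Φ (Ψ f) = f := by
    intro f
    refine (htoFib_inj _ _ ?_)
    filter_upwards [hΦ (Ψ f), hΨ f] with s h1s h2s
    exact h1s.trans h2s.symm
  have hΨΦ : ∀ g : Lp X p μ, Ψ (Φ g) = g := fun g => hΨuniq _ _ (hΦ g)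
  -- `Φ` is additive and homogeneous
  have hΦadd : ∀ g g' : Lp X p μ, Φ (g + g') = Φ g + Φ g' := by
    intro g g'
    refine (htoFib_inj _ _ ?_)
    filter_upwards [hΦ (g + g'), hΦ g, hΦ g', htoFib_add (Φ g) (Φ g'),
      Lp.coeFn_add g g'] with s h1s h2s h3s h4s h5s
    rw [h1s, h4s, h2s, h3s, h5s, Pi.add_apply, map_add]
  have hΦsmul : ∀ (c : ℂ) (g : Lp X p μ), Φ (c • g) = c • Φ g := by
    intro c g
    refine (htoFib_inj _ _ ?_)
    filter_upwards [hΦ (c • g), hΦ g, htoFib_smul c (Φ g),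
      Lp.coeFn_smul c g] with s h1s h2s h3s h4s
    rw [h1s, h3s, h2s, h4s, Pi.smul_apply, LinearMap.map_smul]
  have hΨadd : ∀ f f' : 𝒳, Ψ (f + f') = Ψ f + Ψ f' := by
    intro f f'
    refine hΨuniq _ _ ?_
    filter_upwards [hΨ f, hΨ f', htoFib_add f f', Lp.coeFn_add (Ψ f) (Ψ f')]
      with s h1s h2s h3s h4s
    rw [h3s, h1s, h2s, h4s, Pi.add_apply, map_add]
  have hΨsmul : ∀ (c : ℂ) (f : 𝒳), Ψ (c • f) = c • Ψ f := by
    intro c f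
    refine hΨuniq _ _ ?_
    filter_upwards [hΨ f, htoFib_smul c f, Lp.coeFn_smul c (Ψ f)]
      with s h1s h2s h3s
    rw [h2s, h1s, h3s, Pi.smul_apply, LinearMap.map_smul]
  have hΦsub : ∀ g g' : Lp X p μ, Φ (g - g') = Φ g - Φ g' := by
    intro g g'
    have := hΦadd (g - g') g'
    rw [sub_add_cancel] at this
    rw [this]; abel
  have hΨsub : ∀ f f' : 𝒳, Ψ (f - f') = Ψ f - Ψ f' := by
    intro f f'
    have := hΨadd (f - f') f'
    rw [sub_add_cancel] at this
    rw [this]; abel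
  -- `Φ` and `Ψ` are isometric
  have hΦnorm : ∀ g : Lp X p μ, ‖Φ g‖ = ‖g‖ := by
    intro g
    refine hreq _ _ (norm_nonneg _) (norm_nonneg _) ?_
    rw [hnorm (Φ g), h1 g]
    refine lintegral_congr_ae ?_
    filter_upwards [hΦ g, hMm] with s h1s h2s
    rw [h1s, h2s.2.1]
  have hΨnorm : ∀ f : 𝒳, ‖f‖ = ‖Ψ f‖ := by
    intro f
    refine hreq _ _ (norm_nonneg _) (norm_nonneg _) ?_
    rw [hnorm f, h1 (Ψ f)]
    refine lintegral_congr_ae ?_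
    filter_upwards [hΨ f, hMm] with s h1s h2s
    rw [h1s, h2s.2.1]
  have hΦcont : Continuous Φ := by
    refine (Isometry.continuous ?_)
    refine Isometry.of_dist_eq fun a b => ?_
    rw [dist_eq_norm, dist_eq_norm, ← hΦsub, hΦnorm]
  have hΨcont : Continuous Ψ := by
    refine (Isometry.continuous ?_)
    refine Isometry.of_dist_eq fun a b => ?_
    rw [dist_eq_norm, dist_eq_norm, ← hΨsub, ← hΨnorm]
  -- the operators `S t`
  have hbound : ∀ (t : ℝ) (f : 𝒳), ‖Φ (𝒯 t (Ψ f))‖ ≤ ‖𝒯 t‖ * ‖f‖ := by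
    intro t f
    rw [hΦnorm, hΨnorm f]
    exact (𝒯 t).le_opNorm _
  set S : ℝ → 𝒳 →L[ℂ] 𝒳 := fun t =>
    LinearMap.mkContinuous
      { toFun := fun f => Φ (𝒯 t (Ψ f))
        map_add' := by
          intro f f'
          show Φ (𝒯 t (Ψ (f + f'))) = Φ (𝒯 t (Ψ f)) + Φ (𝒯 t (Ψ f'))
          rw [hΨadd, map_add, hΦadd]
        map_smul' := by
          intro c f
          show Φ (𝒯 t (Ψ (c • f))) = c • Φ (𝒯 t (Ψ f))
          rw [hΨsmul, _root_.map_smul, hΦsmul] }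
      ‖𝒯 t‖ (hbound t) with hSdef
  have hSapply : ∀ (t : ℝ) (f : 𝒳), S t f = Φ (𝒯 t (Ψ f)) := fun t f => rfl
  -- `S` is a `C₀`-semigroup
  have hS0 : S 0 = 1 := by
    ext f
    rw [hSapply, hT.1]
    simpa using hΦΨ f
  have hSsem : ∀ t r : ℝ, 0 ≤ t → 0 ≤ r → S (t + r) = S t ∘L S r := by
    intro t r ht hr
    ext f
    rw [ContinuousLinearMap.comp_apply, hSapply, hSapply, hSapply, hΨΦ,
      hT.2.1 t r ht hr, ContinuousLinearMap.comp_apply]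
  have hScont : ∀ f : 𝒳, ContinuousOn (fun t => S t f) (Set.Ici (0:ℝ)) :=
    fun f => hΦcont.comp_continuousOn (hT.2.2 (Ψ f))
  -- commutation of the extrapolated semigroup with `Mm`
  have hcomm : ∀ t : ℝ, 0 ≤ t → ∀ᵐ s ∂μ, ∀ y : X,
      Tm s t (Mm s y) = Mm s (T s t y) := by
    intro t ht
    filter_upwards [hTm] with s hs
    intro y
    obtain ⟨hsC0, hsext, hsgen, _⟩ := hs
    have h2 : Tendsto (fun r : ℝ => Tm s t (r⁻¹ • (Tm s r (jmap s y) - jmap s y)))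
        (nhdsWithin 0 (Set.Ioi 0)) (nhds (Tm s t (Mm s y))) :=
      ((Tm s t).continuous.tendsto _).comp (hsgen y)
    have h3 : Tendsto (fun r : ℝ => r⁻¹ • (Tm s r (jmap s (T s t y)) - jmap s (T s t y)))
        (nhdsWithin 0 (Set.Ioi 0)) (nhds (Tm s t (Mm s y))) := by
      refine h2.congr' ?_
      filter_upwards [self_mem_nhdsWithin] with r hr
      have hr0 : (0:ℝ) ≤ r := le_of_lt hr
      have hcom : Tm s t (Tm s r (jmap s y)) = Tm s r (Tm s t (jmap s y)) := by
        have e1 := hsC0.2.1 t r ht hr0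
        have e2 := hsC0.2.1 r t hr0 ht
        rw [add_comm] at e2
        have e3 : Tm s t ∘L Tm s r = Tm s r ∘L Tm s t := e1.symm.trans e2
        calc Tm s t (Tm s r (jmap s y)) = (Tm s t ∘L Tm s r) (jmap s y) := rfl
          _ = (Tm s r ∘L Tm s t) (jmap s y) := by rw [e3]
          _ = _ := rfl
      rw [← Complex.coe_smul, ← Complex.coe_smul, _root_.map_smul, map_sub, hcom, hsext t ht y]
    exact tendsto_nhds_unique h3 (hsgen (T s t y))
  -- the fiber formula for `S`
  have hSfib : ∀ t : ℝ, 0 ≤ t → ∀ f : 𝒳, ∀ᵐ s ∂μ,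
      toFib (S t f) s = Tm s t (toFib f s) := by
    intro t ht f
    filter_upwards [hΦ (𝒯 t (Ψ f)), hrep t ht (Ψ f), hΨ f, hcomm t ht]
      with s h1s h2s h3s h4s
    rw [hSapply, h1s, h2s, ← h4s, h3s]
  -- `S` extends `𝒯`
  have hSext : ∀ t : ℝ, 0 ≤ t → ∀ (g : Lp X p μ) (f : 𝒳),
      (∀ᵐ s ∂μ, toFib f s = jmap s (g s)) →
      ∀ᵐ s ∂μ, toFib (S t f) s = jmap s ((𝒯 t g) s) := by
    intro t ht g f hf
    filter_upwards [hSfib t ht f, hf, hrep t ht g, hTm] with s h1s h2s h3s h4s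
    rw [h1s, h2s, h4s.2.1 t ht, h3s]
  -- difference quotients correspond under `Φ` and `Ψ`
  have hfun : ∀ (f : 𝒳) (t : ℝ),
      Ψ (t⁻¹ • (S t f - f)) = t⁻¹ • (𝒯 t (Ψ f) - Ψ f) := by
    intro f t
    have e : ∀ g : Lp X p μ, (t⁻¹:ℝ) • g = ((t⁻¹:ℝ):ℂ) • g := fun g => (Complex.coe_smul _ _).symm
    rw [← Complex.coe_smul, e, hΨsmul, hΨsub, hSapply, hΨΦ]
  have hfun' : ∀ (f : 𝒳) (t : ℝ),
      Φ (t⁻¹ • (𝒯 t (Ψ f) - Ψ f)) = t⁻¹ • (S t f - f) := by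
    intro f t
    have e : ∀ g : Lp X p μ, (t⁻¹:ℝ) • g = ((t⁻¹:ℝ):ℂ) • g := fun g => (Complex.coe_smul _ _).symm
    rw [← Complex.coe_smul, e, hΦsmul, hΦsub, hΦΨ, hSapply]
  -- translation of membership in the domain of the generator
  have hmain : ∀ f : 𝒳,
      (∃ z : 𝒳, Tendsto (fun t : ℝ => t⁻¹ • (S t f - f))
        (nhdsWithin 0 (Set.Ioi 0)) (nhds z)) ↔ Ψ f ∈ 𝓜.domain := by
    intro f
    constructor
    · rintro ⟨z, hz⟩
      refine (hTgen.1 (Ψ f)).mpr ⟨Ψ z, ?_⟩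
      exact ((hΨcont.tendsto z).comp hz).congr (hfun f)
    · intro hfm
      refine ⟨Φ (𝓜 ⟨Ψ f, hfm⟩), ?_⟩
      exact ((hΦcont.tendsto _).comp (hTgen.2 ⟨Ψ f, hfm⟩)).congr (hfun' f)
  refine ⟨S, ⟨hS0, hSsem, hScont⟩, hSfib, hSext, ?_⟩
  intro 𝒜 hA
  have hdom : ∀ f : 𝒳, f ∈ 𝒜.domain ↔ Ψ f ∈ 𝓜.domain :=
    fun f => (hA.1 f).trans (hmain f)
  -- the pointwise identification `Ψ f = Minv (g ·)`
  have hkey : ∀ (f : 𝒳) (g : Lp X p μ), (∀ᵐ s ∂μ, toFib f s = jmap s (g s)) →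
      ∀ᵐ s ∂μ, (Ψ f) s = Minv s (g s) := by
    intro f g hg
    filter_upwards [hΨ f, hg, hMm, hMmInj] with s h1 h2 h3 h4
    apply h4
    rw [← h1, h2, ← h3.1]
  constructor
  · intro f
    rw [hdom f]
    constructor
    · intro hfm
      obtain ⟨g, hg⟩ := (hMul.1 (Ψ f)).mp hfm
      refine ⟨g, ?_⟩
      filter_upwards [hΨ f, hinv, hMm, hg] with s h1 h2 h3 h4
      obtain ⟨hh, hgs⟩ := h4
      obtain ⟨hB, hAB, hBA⟩ := h2
      have hps : (Ψ f) s = Minv s (g s) := by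
        rw [hgs]; exact (hBA ⟨(Ψ f) s, hh⟩).symm
      rw [h1, hps, h3.1]
    · rintro ⟨g, hg⟩
      refine (hMul.1 (Ψ f)).mpr ⟨g, ?_⟩
      filter_upwards [hkey f g hg, hinv] with s h1 h2
      obtain ⟨hB, hAB, hBA⟩ := h2
      have hmem' : (Ψ f) s ∈ (M s).domain := by rw [h1]; exact hB _
      refine ⟨hmem', ?_⟩
      have he : (⟨(Ψ f) s, hmem'⟩ : (M s).domain) = ⟨Minv s (g s), hB (g s)⟩ :=
        Subtype.ext h1
      rw [he]
      exact (hAB (g s)).symm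
  · intro f g hg
    have hmem𝓜 : Ψ (f : 𝒳) ∈ 𝓜.domain := (hdom (f : 𝒳)).mp f.2
    have hAf : 𝒜 f = Φ (𝓜 ⟨Ψ (f : 𝒳), hmem𝓜⟩) := by
      refine tendsto_nhds_unique (hA.2 f) ?_
      exact ((hΦcont.tendsto _).comp (hTgen.2 ⟨Ψ (f : 𝒳), hmem𝓜⟩)).congr (hfun' (f : 𝒳))
    filter_upwards [hΦ (𝓜 ⟨Ψ (f : 𝒳), hmem𝓜⟩), hMul.2 ⟨Ψ (f : 𝒳), hmem𝓜⟩,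
      hkey (f : 𝒳) g hg, hinv] with s h1 h2 h3 h4
    obtain ⟨hh, h2'⟩ := h2
    obtain ⟨hB, hAB, hBA⟩ := h4
    rw [hAf, h1, h2']
    congr 1
    have he : (⟨(Ψ (f : 𝒳)) s, hh⟩ : (M s).domain) = ⟨Minv s (g s), hB (g s)⟩ :=
      Subtype.ext h3
    rw [he]
    exact hAB (g s)
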